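/- Let ψ : Γ × Γ × G/N → U(1) and φ : Γ × G × G/N → U(1) satisfy, for all a, b, c ∈ Γ, g, h ∈ G, z ∈ G/N: (R1) ψ(b, c, z + χ(a)) · ψ(ba, c, z)⁻¹ · ψ(a, cb, z) · ψ(a, b, z)⁻¹ = 1; (R2) φ(b, g, z + χ(a)) · φ(ba, g, z)⁻¹ · φ(a, g, z) = ψ(a, b, z + π(g)) · ψ(a, b, z)⁻¹; (R3) φ(a, g + h, z) = φ(a, h, z + π(g)) · φ(a, g, z). Let χ̄ : Γ → G be any lift of χ (π ∘ χ̄ = χ) and let χ̂ : Γ → Ĝ/N⊥ be a group homomorphism such that ⟨χ̂(a), n⟩ = φ(a, n, 0)⁻¹ for all a ∈ Γ and n ∈ N. Define ψ̂(a, b, ẑ) := ψ(a, b, 0) · φ(b, χ̄(a), 0)⁻¹ · ⟨χ̂(ba) + ẑ, χ̄(ba) − χ̄(a) − χ̄(b)⟩ for ẑ ∈ Ĝ/N⊥ (note χ̄(ba) − χ̄(a) − χ̄(b) ∈ N), and φ̂(a, ĝ, ẑ) := ⟨ĝ, χ̄(a)⟩⁻¹ for ĝ ∈ Ĝ. Then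 for all a, b, c ∈ Γ, ĝ, ĥ ∈ Ĝ, ẑ ∈ Ĝ/N⊥: (D1) ψ̂(b, c, ẑ + χ̂(a)) · ψ̂(ba, c, ẑ)⁻¹ · ψ̂(a, cb, ẑ) · ψ̂(a, b, ẑ)⁻¹ = 1; (D2) ψ̂(a, b, ẑ + π̂(ĝ)) · ψ̂(a, b, ẑ)⁻¹ = φ̂(b, ĝ, ẑ + χ̂(a)) · φ̂(ba, ĝ, ẑ)⁻¹ · φ̂(a, ĝ, ẑ); (D3) φ̂(a, ĝ + ĥ, ẑ) = φ̂(a, ĥ, ẑ + π̂(ĝ)) · φ̂(a, ĝ, ẑ). -/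

import Mathlib

section Helpers

private lemma circleHelperE (E1 E2 E3 E4 F q9 : Circle)
    (h13 : E1 * E3 = E2 * F) (h4 : F = q9⁻¹ * E4) :
    E1 * E2⁻¹ * E3 * E4⁻¹ = q9⁻¹ := by
  rw [Circle.ext_iff] at *
  push_cast at *
  have n2 : (E2:ℂ) ≠ 0 := Circle.coe_ne_zero _
  have n4 : (E4:ℂ) ≠ 0 := Circle.coe_ne_zero _
  have n9 : ((q9:Circle):ℂ) ≠ 0 := Circle.coe_ne_zero _
  field_simp at h13 h4 ⊢
  linear_combination (q9:ℂ)*h13 + (E2:ℂ)*h4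

private lemma circleHelperD1 (p1 p2 p3 p4 p5 q1 q3 q4 q5 q8 q9 qba E1 E2 E3 E4 : Circle)
    (f1 : p1 * p2⁻¹ * p3 * p4⁻¹ = 1)
    (f2 : q5 * q3⁻¹ * q4 = p1 * p5⁻¹)
    (f4 : q8 = q5 * q1)
    (f5 : qba = q8 * q9)
    (fe : E1 * E2⁻¹ * E3 * E4⁻¹ = q9⁻¹) :
    (p5 * q1⁻¹ * E1) * (p2 * qba⁻¹ * E2)⁻¹ * (p3 * q3⁻¹ * E3) * (p4 * q4⁻¹ * E4)⁻¹ = 1 := by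
  rw [mul_inv_eq_one]
  rw [Circle.ext_iff] at *
  push_cast at *
  have hp1 : (p1:ℂ) ≠ 0 := Circle.coe_ne_zero _
  have hp2 : (p2:ℂ) ≠ 0 := Circle.coe_ne_zero _
  have hp3 : (p3:ℂ) ≠ 0 := Circle.coe_ne_zero _
  have hp4 : (p4:ℂ) ≠ 0 := Circle.coe_ne_zero _
  have hp5 : (p5:ℂ) ≠ 0 := Circle.coe_ne_zero _
  have hq1 : (q1:ℂ) ≠ 0 := Circle.coe_ne_zero _
  have hq3 : (q3:ℂ) ≠ 0 := Circle.coe_ne_zero _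
  have hq4 : (q4:ℂ) ≠ 0 := Circle.coe_ne_zero _
  have hq5 : (q5:ℂ) ≠ 0 := Circle.coe_ne_zero _
  have hq8 : (q8:ℂ) ≠ 0 := Circle.coe_ne_zero _
  have hq9 : (q9:ℂ) ≠ 0 := Circle.coe_ne_zero _
  have hqba : (qba:ℂ) ≠ 0 := Circle.coe_ne_zero _
  have hE1 : (E1:ℂ) ≠ 0 := Circle.coe_ne_zero _
  have hE2 : (E2:ℂ) ≠ 0 := Circle.coe_ne_zero _
  have hE3 : (E3:ℂ) ≠ 0 := Circle.coe_ne_zero _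
  have hE4 : (E4:ℂ) ≠ 0 := Circle.coe_ne_zero _
  field_simp at f1 f2 f4 f5 fe ⊢
  linear_combination (p5:ℂ)*E1*p3*E3*q4*f5 + (p5:ℂ)*E1*p3*E3*q4*(q9:ℂ)*f4 +
    (p5:ℂ)*p3*q4*q5*q1*fe + (p3:ℂ)*q1*E2*E4*f2 + (q1:ℂ)*E2*E4*q3*f1

private lemma circleHelperD2 (A B u v w : Circle) :
    (A * (B * (u * v⁻¹ * w⁻¹))) * (A * B)⁻¹ = w⁻¹ * (u⁻¹)⁻¹ * v⁻¹ := by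
  rw [Circle.ext_iff]
  push_cast
  have hA : (A:ℂ) ≠ 0 := Circle.coe_ne_zero _
  have hB : (B:ℂ) ≠ 0 := Circle.coe_ne_zero _
  have hu : (u:ℂ) ≠ 0 := Circle.coe_ne_zero _
  have hv : (v:ℂ) ≠ 0 := Circle.coe_ne_zero _
  have hw : (w:ℂ) ≠ 0 := Circle.coe_ne_zero _
  field_simp

end Helpers

/-- `G` is a second-countable locally compact Hausdorff abelian topological group, `N ≤ G`
discrete with `G/N` compact.  The Pontryagin dual `Ĝ` is modelled by an abelian group
`Ghat` together with a biadditive pairing `e : Ĝ × G → U(1)`, its annihilator subgroup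
`N⊥ = {x | ∀ n ∈ N, ⟨x, n⟩ = 1}`, and the induced (well-defined) pairing
`eQN : Ĝ/N⊥ × N → U(1)` descending `e`.

Given a dualisable dynamical-triple cocycle `(ψ, φ, 1)` (hypotheses (R1), (R2), (R3)),
a lift `χ̄` of `χ`, and the dual base homomorphism `χ̂` determined by
`⟨χ̂(a), n⟩ = φ(a, n, 0)⁻¹`, the dual data
`ψ̂(a,b,zh) := ψ(a,b,0)·φ(b,χ̄(a),0)⁻¹·⟨χ̂(ba)+zh, χ̄(ba)−χ̄(a)−χ̄(b)⟩` and
`φ̂(a,gh,zh) := ⟨gh, χ̄(a)⟩⁻¹` again satisfy the total cocycle conditions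
(D1), (D2), (D3). -/
theorem statement3
    {Γ : Type*} [Group Γ] [Finite Γ]
    {G : Type*} [AddCommGroup G] [TopologicalSpace G] [IsTopologicalAddGroup G]
      [LocallyCompactSpace G] [SecondCountableTopology G] [T2Space G]
    (N : AddSubgroup G) [DiscreteTopology N] [CompactSpace (G ⧸ N)]
    -- the Pontryagin dual of `G`, abstracted by its pairing with `G`
    {Ghat : Type*} [AddCommGroup Ghat]
    (e : Ghat → G → Circle)
    (he₁ : ∀ (x y : Ghat) (g : G), e (x + y) g = e x g * e y g)
    (he₂ : ∀ (x : Ghat) (g h : G), e x (g + h) = e x g * e x h)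
    -- the annihilator `N⊥` of `N`
    (Nperp : AddSubgroup Ghat)
    (hNperp : ∀ x : Ghat, x ∈ Nperp ↔ ∀ n ∈ N, e x (n : G) = 1)
    -- the well-defined pairing of `Ĝ/N⊥` with `N`
    (eQN : Ghat ⧸ Nperp → N → Circle)
    (heQN : ∀ (x : Ghat) (n : N), eQN (x : Ghat ⧸ Nperp) n = e x (n : G))
    -- the base homomorphism `χ` and its dual `χ̂`
    (χ : Γ → G ⧸ N) (hχ : ∀ a b : Γ, χ (a * b) = χ a + χ b)
    (χhat : Γ → Ghat ⧸ Nperp) (hχhat : ∀ a b : Γ, χhat (a * b) = χhat a + χhat b)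
    -- the cocycle data `(ψ, φ, 1)` of a dualisable dynamical triple
    (ψ : Γ → Γ → (G ⧸ N) → Circle) (φ : Γ → G → (G ⧸ N) → Circle)
    (R1 : ∀ (a b c : Γ) (z : G ⧸ N),
      ψ b c (z + χ a) * (ψ (b * a) c z)⁻¹ * ψ a (c * b) z * (ψ a b z)⁻¹ = 1)
    (R2 : ∀ (a b : Γ) (g : G) (z : G ⧸ N),
      φ b g (z + χ a) * (φ (b * a) g z)⁻¹ * φ a g z = ψ a b (z + (g : G ⧸ N)) * (ψ a b z)⁻¹)
    (R3 : ∀ (a : Γ) (g h : G) (z : G ⧸ N),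
      φ a (g + h) z = φ a h (z + (g : G ⧸ N)) * φ a g z)
    -- `χ̂` is determined by `⟨χ̂(a), n⟩ = φ(a, n, 0)⁻¹`
    (hpair : ∀ (a : Γ) (n : N), eQN (χhat a) n = (φ a (n : G) 0)⁻¹)
    -- a lift `χ̄` of `χ`
    (χbar : Γ → G) (hχbar : ∀ a : Γ, ((χbar a : G) : G ⧸ N) = χ a)
    (hη : ∀ a b : Γ, χbar (b * a) - χbar a - χbar b ∈ N)
    -- the dual cocycle data `ψ̂` and `φ̂`
    (ψhat : Γ → Γ → (Ghat ⧸ Nperp) → Circle)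
    (hψhat : ∀ (a b : Γ) (zh : Ghat ⧸ Nperp),
      ψhat a b zh = ψ a b 0 * (φ b (χbar a) 0)⁻¹ *
        eQN (χhat (b * a) + zh) ⟨χbar (b * a) - χbar a - χbar b, hη a b⟩)
    (φhat : Γ → Ghat → (Ghat ⧸ Nperp) → Circle)
    (hφhat : ∀ (a : Γ) (gh : Ghat) (zh : Ghat ⧸ Nperp), φhat a gh zh = (e gh (χbar a))⁻¹) :
    -- (D1)
    (∀ (a b c : Γ) (zh : Ghat ⧸ Nperp),
      ψhat b c (zh + χhat a) * (ψhat (b * a) c zh)⁻¹ * ψhat a (c * b) zh * (ψhat a b zh)⁻¹ = 1) ∧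
    -- (D2)
    (∀ (a b : Γ) (gh : Ghat) (zh : Ghat ⧸ Nperp),
      ψhat a b (zh + (gh : Ghat ⧸ Nperp)) * (ψhat a b zh)⁻¹ =
        φhat b gh (zh + χhat a) * (φhat (b * a) gh zh)⁻¹ * φhat a gh zh) ∧
    -- (D3)
    (∀ (a : Γ) (gh hh : Ghat) (zh : Ghat ⧸ Nperp),
      φhat a (gh + hh) zh = φhat a hh (zh + (gh : Ghat ⧸ Nperp)) * φhat a gh zh) := by
  -- basic consequences of biadditivity
  have e_zero : ∀ x : Ghat, e x 0 = 1 := by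
    intro x
    have h := he₂ x 0 0
    rw [add_zero] at h
    exact left_eq_mul.mp h
  have e_neg : ∀ (x : Ghat) (g : G), e x (-g) = (e x g)⁻¹ := by
    intro x g
    refine eq_inv_of_mul_eq_one_left ?_
    rw [← he₂, neg_add_cancel, e_zero]
  have e_sub : ∀ (x : Ghat) (g h : G), e x (g - h) = e x g * (e x h)⁻¹ := by
    intro x g h
    rw [sub_eq_add_neg, he₂, e_neg]
  have eQN_add_left : ∀ (u v : Ghat ⧸ Nperp) (n : N),
      eQN (u + v) n = eQN u n * eQN v n := by
    intro u v n
    refine QuotientAddGroup.induction_on u fun x => ?_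
    refine QuotientAddGroup.induction_on v fun y => ?_
    rw [← QuotientAddGroup.mk_add, heQN, heQN, heQN, he₁]
  have eQN_add_right : ∀ (u : Ghat ⧸ Nperp) (n m : N),
      eQN u (n + m) = eQN u n * eQN u m := by
    intro u n m
    refine QuotientAddGroup.induction_on u fun x => ?_
    rw [heQN, heQN, heQN, AddSubgroup.coe_add, he₂]
  refine ⟨?_, ?_, ?_⟩
  · -- (D1)
    intro a b c zh
    simp only [hψhat]
    have hZ1 : χhat (c * b) + (zh + χhat a) = χhat c + (χhat (b * a) + zh) := by
      rw [hχhat c b, hχhat b a]; abel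
    have hZ2 : χhat (c * (b * a)) + zh = χhat c + (χhat (b * a) + zh) := by
      rw [hχhat c (b * a)]; abel
    have hZ3 : χhat (c * b * a) + zh = χhat c + (χhat (b * a) + zh) := by
      rw [hχhat (c * b) a, hχhat c b, hχhat b a]; abel
    rw [hZ1, hZ2, hZ3]
    have hn : (⟨χbar (c * b) - χbar b - χbar c, hη b c⟩ : N) +
        ⟨χbar (c * b * a) - χbar a - χbar (c * b), hη a (c * b)⟩ =
        (⟨χbar (c * (b * a)) - χbar (b * a) - χbar c, hη (b * a) c⟩ : N) +
        ⟨χbar (b * a) - χbar a - χbar b, hη a b⟩ := by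
      apply Subtype.ext
      push_cast
      rw [mul_assoc c b a]
      abel
    have h13 : eQN (χhat c + (χhat (b * a) + zh)) ⟨χbar (c * b) - χbar b - χbar c, hη b c⟩ *
        eQN (χhat c + (χhat (b * a) + zh)) ⟨χbar (c * b * a) - χbar a - χbar (c * b), hη a (c * b)⟩ =
        eQN (χhat c + (χhat (b * a) + zh))
          ⟨χbar (c * (b * a)) - χbar (b * a) - χbar c, hη (b * a) c⟩ *
        eQN (χhat c + (χhat (b * a) + zh)) ⟨χbar (b * a) - χbar a - χbar b, hη a b⟩ := by
      rw [← eQN_add_right, ← eQN_add_right, hn]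
    have h4 : eQN (χhat c + (χhat (b * a) + zh)) ⟨χbar (b * a) - χbar a - χbar b, hη a b⟩ =
        (φ c ((⟨χbar (b * a) - χbar a - χbar b, hη a b⟩ : N) : G) 0)⁻¹ *
        eQN (χhat (b * a) + zh) ⟨χbar (b * a) - χbar a - χbar b, hη a b⟩ := by
      rw [eQN_add_left, hpair]
    have fe := circleHelperE _ _ _ _ _ _ h13 h4
    have hη0 : ((((⟨χbar (b * a) - χbar a - χbar b, hη a b⟩ : N) : G)) : G ⧸ N) = 0 :=
      (QuotientAddGroup.eq_zero_iff _).mpr (hη a b)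
    have f5 : φ c (χbar (b * a)) 0 = φ c (χbar a + χbar b) 0 *
        φ c ((⟨χbar (b * a) - χbar a - χbar b, hη a b⟩ : N) : G) 0 := by
      have harg : ((⟨χbar (b * a) - χbar a - χbar b, hη a b⟩ : N) : G) + (χbar a + χbar b) =
          χbar (b * a) := by
        show χbar (b * a) - χbar a - χbar b + (χbar a + χbar b) = χbar (b * a)
        abel
      have h := R3 c ((⟨χbar (b * a) - χbar a - χbar b, hη a b⟩ : N) : G) (χbar a + χbar b) 0
      rw [harg, hη0, add_zero] at h
      exact h
    have f4 : φ c (χbar a + χbar b) 0 = φ c (χbar a) (0 + χ b) * φ c (χbar b) 0 := by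
      have h := R3 c (χbar b) (χbar a) 0
      rw [hχbar b, add_comm (χbar b) (χbar a)] at h
      exact h
    have f2 : φ c (χbar a) (0 + χ b) * (φ (c * b) (χbar a) 0)⁻¹ * φ b (χbar a) 0 =
        ψ b c (0 + χ a) * (ψ b c 0)⁻¹ := by
      have h := R2 b c (χbar a) 0
      rw [hχbar a] at h
      exact h
    exact circleHelperD1 _ _ _ _ _ _ _ _ _ _ _ _ _ _ _ _ (R1 a b c 0) f2 f4 f5 fe
  · -- (D2)
    intro a b gh zh
    simp only [hψhat, hφhat]
    have hZ : χhat (b * a) + (zh + (gh : Ghat ⧸ Nperp)) =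
        (χhat (b * a) + zh) + (gh : Ghat ⧸ Nperp) := (add_assoc _ _ _).symm
    rw [hZ, eQN_add_left, heQN]
    have hsplit : e gh ((⟨χbar (b * a) - χbar a - χbar b, hη a b⟩ : N) : G) =
        e gh (χbar (b * a)) * (e gh (χbar a))⁻¹ * (e gh (χbar b))⁻¹ := by
      show e gh (χbar (b * a) - χbar a - χbar b) = _
      rw [e_sub, e_sub]
    rw [hsplit]
    exact circleHelperD2 _ _ _ _ _
  · -- (D3)
    intro a gh hh zh
    simp only [hφhat]
    rw [he₁, mul_inv]
    exact mul_comm _ _
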